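/- Necessity direction of Lemma 2: Let {Π_m}_{m=1}^M be a POVM with rank-one operators on the 2-dimensional subspace H of C² ⊗ H_B. If there exist POVMs {Φ_m^{(0)}} on H_B^{(0)} and {Φ_m^{(1)}} on H_B^{(1)} with Π_m = P(|0⟩⟨0|_A ⊗ Φ_m^{(0)} + |1⟩⟨1|_A ⊗ Φ_m^{(1)})P for all m, then there exist numbers c_m ∈ [0,1] with Σ_m c_m Π_m = Z_0, where Z_0 = P(|0⟩⟨0|_A ⊗ I_B)P. -/

import Mathlib

noncomputable section
open scoped InnerProductSpace ComplexConjugate ComplexOrder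

variable {E F : Type*} [NormedAddCommGroup E] [InnerProductSpace ℂ E]
  [NormedAddCommGroup F] [InnerProductSpace ℂ F]

/-- rank-one operator |x⟩⟨y| : E → F -/
def rankOne (x : F) (y : E) : E →ₗ[ℂ] F where
  toFun z := ⟪y, z⟫_ℂ • x
  map_add' a b := by simp [inner_add_right, add_smul]
  map_smul' c a := by simp [inner_smul_right, smul_smul]

/-- positive semidefinite operator (using the complex partial order) -/
def IsPSD {E : Type*} [NormedAddCommGroup E] [InnerProductSpace ℂ E]
    (T : E →ₗ[ℂ] E) : Prop := ∀ x : E, 0 ≤ ⟪x, T x⟫_ℂ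

/-- simple tensor v ⊗ b in ℂⁿ ⊗ H_B, modeled as `PiLp 2` -/
def tp {n : ℕ} {HB : Type*} [NormedAddCommGroup HB] [InnerProductSpace ℂ HB]
    (v : EuclideanSpace ℂ (Fin n)) (b : HB) : PiLp 2 (fun _ : Fin n => HB) :=
  (WithLp.equiv 2 _).symm fun i => v i • b

/-- operator tensor M ⊗ X on ℂⁿ ⊗ H_B, where M is a matrix on ℂⁿ -/
def opT {n : ℕ} {HB : Type*} [NormedAddCommGroup HB] [InnerProductSpace ℂ HB]
    (M : Matrix (Fin n) (Fin n) ℂ) (X : HB →ₗ[ℂ] HB) :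
    PiLp 2 (fun _ : Fin n => HB) →ₗ[ℂ] PiLp 2 (fun _ : Fin n => HB) where
  toFun f := (WithLp.equiv 2 _).symm fun i => ∑ j, M i j • X (f j)
  map_add' f g := by
    ext i
    simp only [WithLp.equiv_symm_apply, PiLp.toLp_apply, PiLp.add_apply, map_add, smul_add]
    exact Finset.sum_add_distrib
  map_smul' c f := by
    ext i
    simp only [WithLp.equiv_symm_apply, PiLp.toLp_apply, PiLp.smul_apply, map_smul, RingHom.id_apply,
      Finset.smul_sum]
    exact Finset.sum_congr rfl fun j _ => (smul_comm _ _ _)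

/-- outer product matrix |v⟩⟨v| -/
def outerM {n : ℕ} (v : EuclideanSpace ℂ (Fin n)) : Matrix (Fin n) (Fin n) ℂ :=
  fun i j => v i * conj (v j)

/-- orthogonal projection onto a subspace, as an operator -/
def projOp {E : Type*} [NormedAddCommGroup E] [InnerProductSpace ℂ E]
    [FiniteDimensional ℂ E] (K : Submodule ℂ E) : E →ₗ[ℂ] E :=
  (K.subtypeL.comp K.orthogonalProjectionOnto).toLinearMap

theorem rankOne_apply (x : F) (y z : E) : rankOne x y z = ⟪y, z⟫_ℂ • x := rfl

theorem IsPSD_symm (T : E →ₗ[ℂ] E) (h : IsPSD T) : T.IsSymmetric := by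
  rw [LinearMap.isSymmetric_iff_inner_map_self_real]
  intro v
  have h1 := h v
  rw [Complex.le_def] at h1
  have h2 : ⟪T v, v⟫_ℂ = conj ⟪v, T v⟫_ℂ := (inner_conj_symm _ _).symm
  rw [h2, Complex.conj_conj]
  exact (Complex.conj_eq_iff_im.mpr h1.2.symm).symm

theorem psd_ann (T : E →ₗ[ℂ] E) (hT : IsPSD T) {y : E}
    (hy : ⟪y, T y⟫_ℂ = 0) : T y = 0 := by
  have hsym := IsPSD_symm T hT
  have key : ∀ u : E, ⟪u, T y⟫_ℂ = 0 := by
    intro u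
    by_contra ha
    set a := ⟪u, T y⟫_ℂ with hadef
    set q := (⟪u, T u⟫_ℂ).re with hq
    have hqI := hT u
    rw [Complex.le_def] at hqI
    have hq0 : 0 ≤ q := by simpa using hqI.1
    have him : (⟪u, T u⟫_ℂ).im = 0 := by simpa using hqI.2.symm
    set ε : ℝ := 1/(q+1) with hεdef
    have hq1 : (0:ℝ) < q + 1 := by linarith
    have hε : 0 < ε := by positivity
    set t : ℂ := -(ε:ℂ) * a with htdef
    have hyu : ⟪y, T u⟫_ℂ = conj a := by
      rw [← hsym y u, ← Complex.conj_conj ⟪T y, u⟫_ℂ]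
      congr 1
      exact inner_conj_symm u (T y)
    have h0 := hT (y + t • u)
    have expand : ⟪y + t • u, T (y + t • u)⟫_ℂ
        = ⟪y, T y⟫_ℂ + t * ⟪y, T u⟫_ℂ + conj t * a + conj t * t * ⟪u, T u⟫_ℂ := by
      simp only [map_add, map_smul, inner_add_left, inner_add_right,
        inner_smul_left, inner_smul_right, hadef]
      ring
    have hconj : conj t = -(ε:ℂ) * conj a := by simp [htdef]
    have h1 : a * conj a = (Complex.normSq a : ℂ) := Complex.mul_conj a
    have hz : ⟪y + t • u, T (y + t • u)⟫_ℂ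
        = -(2*ε*Complex.normSq a : ℝ) + ((ε^2*Complex.normSq a : ℝ)) * ⟪u, T u⟫_ℂ := by
      rw [expand, hy, hyu, hconj, htdef]
      push_cast
      linear_combination ((ε:ℂ)^2 * ⟪u, T u⟫_ℂ - 2*(ε:ℂ)) * h1
    rw [hz, Complex.le_def] at h0
    have hre : (0:ℝ) ≤ -(2*ε*Complex.normSq a) + (ε^2*Complex.normSq a) * q := by
      have := h0.1
      simpa [Complex.mul_re, Complex.ofReal_re, Complex.ofReal_im, him,
        ← Complex.ofReal_pow, ← hq] using this
    have hna : 0 < Complex.normSq a := by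
      rw [Complex.normSq_pos]; exact ha
    have hεq : ε * (q + 1) = 1 := by
      rw [hεdef]; field_simp
    have hεq2 : ε * q = 1 - ε := by nlinarith [hεq]
    have hε2q : ε^2 * q = ε - ε^2 := by
      have h' : ε^2 * q = ε * (ε * q) := by ring
      rw [h', hεq2]; ring
    nlinarith [mul_pos hε hna, mul_nonneg (sq_nonneg ε) hna.le, hre, hε2q]
  exact ext_inner_left ℂ (fun u => by rw [key u, inner_zero_right])

theorem psd_rankOne_decomp {A B : E →ₗ[ℂ] E} (hA : IsPSD A) (hB : IsPSD B) {x : E}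
    (hx : x ≠ 0) (hs : A + B = rankOne x x) :
    ∃ c : ℝ, 0 ≤ c ∧ c ≤ 1 ∧ A = (c : ℂ) • rankOne x x := by
  have hsym := IsPSD_symm A hA
  have hnx : (0:ℝ) < ‖x‖ := norm_pos_iff.mpr hx
  have hxx : ⟪x, x⟫_ℂ = ((‖x‖^2 : ℝ) : ℂ) := by
    rw [inner_self_eq_norm_sq_to_K]; norm_cast
  have hn2 : ((‖x‖^2 : ℝ) : ℂ) ≠ 0 := by
    simp only [ne_eq, Complex.ofReal_eq_zero]
    positivity
  have hAort : ∀ y : E, ⟪x, y⟫_ℂ = 0 → A y = 0 := by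
    intro y hy
    apply psd_ann A hA
    have h1 : ⟪y, (A + B) y⟫_ℂ = 0 := by
      rw [hs, rankOne_apply, inner_smul_right, hy, zero_mul]
    have h2 : ⟪y, A y⟫_ℂ + ⟪y, B y⟫_ℂ = 0 := by
      simpa [inner_add_right] using h1
    have hle : ⟪y, A y⟫_ℂ ≤ 0 := by
      calc ⟪y, A y⟫_ℂ ≤ ⟪y, A y⟫_ℂ + ⟪y, B y⟫_ℂ := le_add_of_nonneg_right (hB y)
        _ = 0 := h2
    exact le_antisymm hle (hA y)
  set d : ℂ := ⟪x, A x⟫_ℂ / ((‖x‖^2 : ℝ) : ℂ) with hd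
  have hAx : A x = d • x := by
    have hxy' : ⟪x, A x - d • x⟫_ℂ = 0 := by
      rw [inner_sub_right, inner_smul_right, hxx, hd]
      field_simp
      ring
    have hAy' : A (A x - d • x) = 0 := hAort _ hxy'
    have hy1 : ⟪A x - d • x, A x⟫_ℂ = 0 := by
      rw [← hsym (A x - d • x) x, hAy', inner_zero_left]
    have hy2 : ⟪A x - d • x, x⟫_ℂ = 0 := by
      rw [← inner_conj_symm, hxy', map_zero]
    have hself : ⟪A x - d • x, A x - d • x⟫_ℂ = 0 := by
      rw [inner_sub_right, inner_smul_right, hy1, hy2, mul_zero, sub_zero]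
    have := inner_self_eq_zero.mp hself
    rw [sub_eq_zero] at this
    exact this
  have key : ∀ v : E, A v = (d * (⟪x, v⟫_ℂ / ((‖x‖^2 : ℝ) : ℂ))) • x := by
    intro v
    set s : ℂ := ⟪x, v⟫_ℂ / ((‖x‖^2 : ℝ) : ℂ) with hsdef
    have hxy : ⟪x, v - s • x⟫_ℂ = 0 := by
      rw [inner_sub_right, inner_smul_right, hxx, hsdef]
      field_simp
      ring
    have h0 : A (v - s • x) = 0 := hAort _ hxy
    have h1 : A v = s • A x := by
      have := h0
      rw [map_sub, map_smul, sub_eq_zero] at this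
      exact this
    rw [h1, hAx, smul_smul, mul_comm]
  -- the real coefficient
  have hAxx := hA x
  rw [Complex.le_def] at hAxx
  set r : ℝ := (⟪x, A x⟫_ℂ).re with hr
  have hrr : ⟪x, A x⟫_ℂ = (r : ℂ) := by
    apply Complex.ext
    · simp [hr]
    · simpa using hAxx.2.symm
  have hr0 : 0 ≤ r := by simpa using hAxx.1
  have hBxx := hB x
  rw [Complex.le_def] at hBxx
  have hsumx : ⟪x, (A + B) x⟫_ℂ = ((‖x‖^2 : ℝ) : ℂ) * ((‖x‖^2 : ℝ) : ℂ) := by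
    rw [hs, rankOne_apply, inner_smul_right, hxx]
  have hr1 : r ≤ ‖x‖^2 * ‖x‖^2 := by
    have h2 : ⟪x, A x⟫_ℂ + ⟪x, B x⟫_ℂ = ((‖x‖^2 : ℝ) : ℂ) * ((‖x‖^2 : ℝ) : ℂ) := by
      rw [← hsumx]; simp [inner_add_right]
    have := congrArg Complex.re h2
    simp only [Complex.add_re, ← Complex.ofReal_mul, Complex.ofReal_re] at this
    rw [← hr] at this
    have hb0 : 0 ≤ (⟪x, B x⟫_ℂ).re := by simpa using hBxx.1
    linarith
  refine ⟨r / (‖x‖^2 * ‖x‖^2), by positivity, by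
    rw [div_le_one (by positivity)]; exact hr1, ?_⟩
  apply LinearMap.ext
  intro v
  rw [key v, LinearMap.smul_apply, rankOne_apply, smul_smul]
  congr 1
  rw [hd, hrr]
  push_cast
  field_simp

section Aux2
variable {n : ℕ} {HB : Type*} [NormedAddCommGroup HB] [InnerProductSpace ℂ HB]

theorem opT_apply (M : Matrix (Fin n) (Fin n) ℂ) (X : HB →ₗ[ℂ] HB)
    (f : PiLp 2 (fun _ : Fin n => HB)) (i : Fin n) :
    opT M X f i = ∑ j, M i j • X (f j) := rfl

theorem opT_zero (M : Matrix (Fin n) (Fin n) ℂ) : opT (HB := HB) M 0 = 0 := by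
  apply LinearMap.ext; intro f
  ext i
  simp [opT_apply]

theorem opT_add_right (M : Matrix (Fin n) (Fin n) ℂ) (X Y : HB →ₗ[ℂ] HB) :
    opT M (X + Y) = opT M X + opT M Y := by
  apply LinearMap.ext; intro f
  ext i
  simp [opT_apply, smul_add, Finset.sum_add_distrib]

theorem opT_sum {ι : Type*} (s : Finset ι) (M : Matrix (Fin n) (Fin n) ℂ)
    (Φ : ι → (HB →ₗ[ℂ] HB)) :
    opT M (∑ m ∈ s, Φ m) = ∑ m ∈ s, opT M (Φ m) := by
  classical
  induction s using Finset.induction with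
  | empty => simp [opT_zero]
  | insert _ _ h ih => rw [Finset.sum_insert h, Finset.sum_insert h, opT_add_right, ih]

theorem opT_outerM_psd (v : EuclideanSpace ℂ (Fin n)) {X : HB →ₗ[ℂ] HB} (hX : IsPSD X) :
    IsPSD (opT (outerM v) X) := by
  intro f
  have hL : ⟪f, opT (outerM v) X f⟫_ℂ = ∑ i, ∑ j, (v i * conj (v j)) * ⟪f i, X (f j)⟫_ℂ := by
    rw [PiLp.inner_apply]
    refine Finset.sum_congr rfl fun i _ => ?_
    rw [opT_apply, inner_sum]
    refine Finset.sum_congr rfl fun j _ => ?_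
    rw [inner_smul_right]
    simp only [outerM]
  have hXg : X (∑ j, conj (v j) • f j) = ∑ j, conj (v j) • X (f j) := by
    simp
  have hR : ⟪∑ j, conj (v j) • f j, X (∑ j, conj (v j) • f j)⟫_ℂ
      = ∑ i, ∑ j, (v i * conj (v j)) * ⟪f i, X (f j)⟫_ℂ := by
    rw [hXg, sum_inner]
    refine Finset.sum_congr rfl fun i _ => ?_
    rw [inner_smul_left, inner_sum, Complex.conj_conj, Finset.mul_sum]
    refine Finset.sum_congr rfl fun j _ => ?_
    rw [inner_smul_right]
    ring
  rw [hL, ← hR]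
  exact hX _

theorem projOp_eq_self {E : Type*} [NormedAddCommGroup E] [InnerProductSpace ℂ E]
    [FiniteDimensional ℂ E] {K : Submodule ℂ E} {b : E} (hb : b ∈ K) : projOp K b = b := by
  have h : K.orthogonalProjectionOnto b = ⟨b, hb⟩ :=
    Submodule.orthogonalProjectionOnto_mem_subspace_eq_self (⟨b, hb⟩ : K)
  simp [projOp, h]

theorem opT_outerM_tp (e : Fin 2 → EuclideanSpace ℂ (Fin 2)) (he : Orthonormal ℂ e)
    (X : HB →ₗ[ℂ] HB) (b b' : HB) :
    opT (outerM (e 0)) X (tp (e 0) b + tp (e 1) b') = tp (e 0) (X b) := by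
  have h00 : ∑ j, conj (e 0 j) * e 0 j = 1 := by
    have h := orthonormal_iff_ite.mp he 0 0
    rw [if_pos rfl] at h
    rw [← h, PiLp.inner_apply]
    exact Finset.sum_congr rfl fun j _ => by
      simp [mul_comm, Complex.mul_conj, Complex.normSq_eq_norm_sq]
  have h01 : ∑ j, conj (e 0 j) * e 1 j = 0 := by
    have h := orthonormal_iff_ite.mp he 0 1
    rw [if_neg (by decide)] at h
    rw [← h, PiLp.inner_apply]
    exact Finset.sum_congr rfl fun j _ => by simp [mul_comm]
  ext i
  rw [opT_apply]
  have step : ∀ j, outerM (e 0) i j • (X ((tp (e 0) b + tp (e 1) b') j))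
      = (conj (e 0 j) * e 0 j) • (e 0 i • X b) + (conj (e 0 j) * e 1 j) • (e 0 i • X b') := by
    intro j
    have hcomp : (tp (e 0) b + tp (e 1) b') j = e 0 j • b + e 1 j • b' := rfl
    rw [hcomp, map_add, map_smul, map_smul, outerM, smul_add, smul_smul, smul_smul,
      smul_smul, smul_smul]
    congr 1 <;> ring_nf
  rw [Finset.sum_congr rfl fun j _ => step j, Finset.sum_add_distrib,
    ← Finset.sum_smul, ← Finset.sum_smul, h00, h01, one_smul, zero_smul, add_zero]
  rfl

end Aux2


/-- necessity direction of Lemma 2: if a rank-one POVM {Π_m} on the 2D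
subspace H = span(π, π⊥) of ℂ² ⊗ H_B is realized as
Π_m = P(|0⟩⟨0|⊗Φ_m⁰ + |1⟩⟨1|⊗Φ_m¹)P with POVMs Φ⁰, Φ¹ on H_B⁽⁰⁾, H_B⁽¹⁾, then there
are c_m ∈ [0,1] with Σ c_m Π_m = Z_0 = P(|0⟩⟨0|⊗I_B)P. -/
theorem lemma2_necessity
    {HB : Type*} [NormedAddCommGroup HB] [InnerProductSpace ℂ HB] [FiniteDimensional ℂ HB]
    (M : ℕ)
    (e : Fin 2 → EuclideanSpace ℂ (Fin 2)) (he : Orthonormal ℂ e)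
    (η ν : Fin 2 → HB) (pi pip : PiLp 2 (fun _ : Fin 2 => HB))
    (hON : Orthonormal ℂ ![pi, pip])
    (hpi : pi = tp (e 0) (η 0) + tp (e 1) (η 1))
    (hpip : pip = tp (e 0) (ν 0) + tp (e 1) (ν 1))
    (horth : ∀ k : Fin 2, ⟪η k, ν k⟫_ℂ = 0)
    (Pv : Fin M → (PiLp 2 (fun _ : Fin 2 => HB) →ₗ[ℂ] PiLp 2 (fun _ : Fin 2 => HB)))
    (hrank : ∀ m, ∃ x, x ≠ 0 ∧ x ∈ Submodule.span ℂ {pi, pip} ∧ Pv m = rankOne x x)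
    (hsum : ∑ m, Pv m = rankOne pi pi + rankOne pip pip)
    (Φ : Fin 2 → Fin M → (HB →ₗ[ℂ] HB))
    (hΦpsd : ∀ k m, IsPSD (Φ k m))
    (hΦrange : ∀ k m, LinearMap.range (Φ k m) ≤ Submodule.span ℂ {η k, ν k})
    (hΦsum : ∀ k, ∑ m, Φ k m = projOp (Submodule.span ℂ {η k, ν k}))
    (hrecon : ∀ m, Pv m =
      (rankOne pi pi + rankOne pip pip) ∘ₗ
        (opT (outerM (e 0)) (Φ 0 m) + opT (outerM (e 1)) (Φ 1 m)) ∘ₗ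
        (rankOne pi pi + rankOne pip pip)) :
    ∃ c : Fin M → ℝ, (∀ m, 0 ≤ c m ∧ c m ≤ 1) ∧
      ∑ m, (c m : ℂ) • Pv m =
        (rankOne pi pi + rankOne pip pip) ∘ₗ opT (outerM (e 0)) LinearMap.id ∘ₗ
          (rankOne pi pi + rankOne pip pip) := by
  classical
  set K0 : Submodule ℂ HB := Submodule.span ℂ {η 0, ν 0} with hK0
  set P := rankOne pi pi + rankOne pip pip with hPdef
  have hPsymm : ∀ z w : PiLp 2 (fun _ : Fin 2 => HB), ⟪P z, w⟫_ℂ = ⟪z, P w⟫_ℂ := by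
    intro z w
    simp only [hPdef, LinearMap.add_apply, inner_add_left, inner_add_right, rankOne_apply,
      inner_smul_left, inner_smul_right]
    rw [inner_conj_symm, inner_conj_symm]
    ring
  have hPpsd_conj : ∀ (S : PiLp 2 (fun _ : Fin 2 => HB) →ₗ[ℂ] PiLp 2 (fun _ : Fin 2 => HB)),
      IsPSD S → IsPSD (P ∘ₗ S ∘ₗ P) := by
    intro S hS z
    rw [LinearMap.comp_apply, LinearMap.comp_apply, ← hPsymm z (S (P z))]
    exact hS (P z)
  set A : Fin M → _ := fun m => P ∘ₗ opT (outerM (e 0)) (Φ 0 m) ∘ₗ P with hAdef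
  have hAB : ∀ m, A m + (P ∘ₗ opT (outerM (e 1)) (Φ 1 m) ∘ₗ P) = Pv m := by
    intro m
    rw [hrecon m]
    apply LinearMap.ext; intro z
    simp only [hAdef, LinearMap.add_apply, LinearMap.comp_apply, map_add]
  have hApsd : ∀ m, IsPSD (A m) := fun m => hPpsd_conj _ (opT_outerM_psd _ (hΦpsd 0 m))
  have hBpsd : ∀ m, IsPSD (P ∘ₗ opT (outerM (e 1)) (Φ 1 m) ∘ₗ P) :=
    fun m => hPpsd_conj _ (opT_outerM_psd _ (hΦpsd 1 m))
  choose x hx0 hxspan hPvx using hrank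
  have hdecomp : ∀ m, ∃ c : ℝ, 0 ≤ c ∧ c ≤ 1 ∧ A m = (c : ℂ) • Pv m := by
    intro m
    obtain ⟨c, h0, h1, hc⟩ := psd_rankOne_decomp (hApsd m) (hBpsd m) (hx0 m)
      (by rw [hAB m, hPvx m])
    exact ⟨c, h0, h1, by rw [hc, hPvx m]⟩
  choose c hc0 hc1 hcA using hdecomp
  refine ⟨c, fun m => ⟨hc0 m, hc1 m⟩, ?_⟩
  have hstep1 : ∑ m, (c m : ℂ) • Pv m = ∑ m, A m :=
    Finset.sum_congr rfl fun m _ => (hcA m).symm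
  have hstep2 : ∑ m, A m = P ∘ₗ opT (outerM (e 0)) (projOp K0) ∘ₗ P := by
    rw [← hΦsum 0, opT_sum]
    apply LinearMap.ext; intro z
    simp only [hAdef, LinearMap.sum_apply, LinearMap.comp_apply, map_sum]
  have hpi0 : opT (outerM (e 0)) (projOp K0) pi = opT (outerM (e 0)) LinearMap.id pi := by
    rw [hpi, opT_outerM_tp e he, opT_outerM_tp e he, LinearMap.id_apply,
      projOp_eq_self (Submodule.subset_span (Set.mem_insert _ _))]
  have hpip0 : opT (outerM (e 0)) (projOp K0) pip = opT (outerM (e 0)) LinearMap.id pip := by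
    rw [hpip, opT_outerM_tp e he, opT_outerM_tp e he, LinearMap.id_apply,
      projOp_eq_self (Submodule.subset_span (by simp))]
  rw [hstep1, hstep2]
  apply LinearMap.ext; intro z
  have hPz : P z = ⟪pi, z⟫_ℂ • pi + ⟪pip, z⟫_ℂ • pip := by
    simp [hPdef, LinearMap.add_apply, rankOne_apply]
  simp only [LinearMap.comp_apply]
  rw [hPz, map_add, map_smul, map_smul, map_add, map_smul, map_smul, hpi0, hpip0]
  simp [map_add, map_smul]
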